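/- Let a ≥ 0, w > 0 be reals and let λ₀, λ₁, ..., λₙ be pairwise essentially-disjoint closed intervals in [0,∞) (any two intersect in at most a point), where λ₀ has length w (i.e., λ₀ = [c, c+w] for some c). Then Σ_{k=1}^n length([a, a+w] ∩ λ_k) ≤ w − length([a, a+w] ∩ λ₀) + length([0,a] ∩ λ₀) + (length(λ₀) − length([0, a+w] ∩ λ₀)). -/

import Mathlib

/-- Length of the intersection `[u,v] ∩ [a,b]` of two closed intervals. -/
noncomputable def interLen (u v a b : ℝ) : ℝ := max (min v b - max u a) 0

open MeasureTheory

lemma volume_icc_inter (u v a b : ℝ) :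
    volume (Set.Icc u v ∩ Set.Icc a b) = ENNReal.ofReal (interLen u v a b) := by
  rw [Set.Icc_inter_Icc, Real.volume_Icc, interLen]
  rcases le_or_gt (min v b - max u a) 0 with h | h
  · rw [max_eq_right h, ENNReal.ofReal_eq_zero.mpr h, ENNReal.ofReal_zero]
  · rw [max_eq_left h.le]

lemma interLen_nonneg (u v a b : ℝ) : 0 ≤ interLen u v a b := le_max_right _ _

lemma sum_interLen_le (n : ℕ) (a b : Fin (n + 1) → ℝ)
    (hdisj : ∀ k m, k ≠ m → min (b k) (b m) ≤ max (a k) (a m))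
    (x w : ℝ) (hw : 0 ≤ w) :
    ∑ k, interLen x (x + w) (a k) (b k) ≤ w := by
  set f : Fin (n + 1) → Set ℝ := fun k => Set.Icc x (x + w) ∩ Set.Icc (a k) (b k) with hf
  have hmeas : ∀ k, NullMeasurableSet (f k) volume := fun k =>
    (measurableSet_Icc.inter measurableSet_Icc).nullMeasurableSet
  have hpair : Pairwise (Function.onFun (AEDisjoint volume) f) := by
    intro k m hkm
    have h1 : f k ∩ f m ⊆ Set.Icc (a k) (b k) ∩ Set.Icc (a m) (b m) := by
      intro y hy
      exact ⟨hy.1.2, hy.2.2⟩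
    have h2 : volume (Set.Icc (a k) (b k) ∩ Set.Icc (a m) (b m)) = 0 := by
      rw [Set.Icc_inter_Icc, Real.volume_Icc]
      exact ENNReal.ofReal_eq_zero.mpr (sub_nonpos.mpr (hdisj k m hkm))
    exact measure_mono_null h1 h2
  have key : ENNReal.ofReal (∑ k, interLen x (x + w) (a k) (b k)) ≤ ENNReal.ofReal w := by
    rw [ENNReal.ofReal_sum_of_nonneg (fun k _ => interLen_nonneg _ _ _ _)]
    calc ∑ k, ENNReal.ofReal (interLen x (x + w) (a k) (b k))
        = ∑ k, volume (f k) := by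
          exact Finset.sum_congr rfl fun k _ => (volume_icc_inter _ _ _ _).symm
      _ = ∑' k, volume (f k) := (tsum_fintype _).symm
      _ = volume (⋃ k, f k) := (measure_iUnion₀ hpair hmeas).symm
      _ ≤ volume (Set.Icc x (x + w)) :=
          measure_mono (Set.iUnion_subset fun k => Set.inter_subset_left)
      _ = ENNReal.ofReal w := by rw [Real.volume_Icc]; ring_nf
  exact (ENNReal.ofReal_le_ofReal_iff hw).mp key

theorem stmt_14 (n : ℕ) (a b : Fin (n + 1) → ℝ)
    (hab : ∀ k, a k ≤ b k) (hnonneg : ∀ k, 0 ≤ a k)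
    (hdisj : ∀ k m, k ≠ m → min (b k) (b m) ≤ max (a k) (a m))
    (x w c : ℝ) (hx : 0 ≤ x) (hw : 0 < w)
    (ha0 : a 0 = c) (hb0 : b 0 = c + w) :
    ∑ k ∈ Finset.univ.erase (0 : Fin (n + 1)),
        interLen x (x + w) (a k) (b k) ≤
      w - interLen x (x + w) (a 0) (b 0) + interLen 0 x (a 0) (b 0) +
        ((b 0 - a 0) - interLen 0 (x + w) (a 0) (b 0)) := by
  have hsum := sum_interLen_le n a b hdisj x w hw.le
  have hsplit : ∑ k ∈ Finset.univ.erase (0 : Fin (n + 1)),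
      interLen x (x + w) (a k) (b k) + interLen x (x + w) (a 0) (b 0)
      = ∑ k, interLen x (x + w) (a k) (b k) :=
    Finset.sum_erase_add _ _ (Finset.mem_univ _)
  have h1 : ∑ k ∈ Finset.univ.erase (0 : Fin (n + 1)),
      interLen x (x + w) (a k) (b k) ≤ w - interLen x (x + w) (a 0) (b 0) := by
    linarith [hsum, hsplit]
  have hL : 0 ≤ interLen 0 x (a 0) (b 0) := interLen_nonneg _ _ _ _
  have hM : interLen 0 (x + w) (a 0) (b 0) ≤ b 0 - a 0 := by
    rw [interLen]
    rcases le_or_gt (min (x + w) (b 0) - max 0 (a 0)) 0 with h | h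
    · rw [max_eq_right h]
      linarith [hab 0]
    · rw [max_eq_left h.le]
      have h2 : max 0 (a 0) = a 0 := max_eq_right (hnonneg 0)
      rw [h2]
      have : min (x + w) (b 0) ≤ b 0 := min_le_right _ _
      linarith
  linarith
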